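/- Let T₁ and T₂ be regular strictly convex bodies in the plane ℝ², let p and q be two distinct points in bd T₁ ∩ bd T₂ such that the tangent lines of T₁ and T₂ at p coincide and the tangent lines of T₁ and T₂ at q coincide. Let ℓ be the line through p and q, with closed half-planes ℓ⁺, ℓ⁻. Then T := (T₁ ∩ ℓ⁺) ∪ (T₂ ∩ ℓ⁻) is a regular strictly convex body. -/

import Mathlib

open Set

abbrev E2 := EuclideanSpace ℝ (Fin 2)

/-- `v` is an outer normal of a supporting line of `T` at `x`. -/
def SupportsAt (T : Set E2) (v x : E2) : Prop :=
  ∀ y ∈ T, (inner ℝ v y : ℝ) ≤ (inner ℝ v x : ℝ)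

/-- A planar convex body: compact, convex, nonempty interior. -/
def IsBody2 (T : Set E2) : Prop :=
  IsCompact T ∧ Convex ℝ T ∧ (interior T).Nonempty

/-- A body is regular if each boundary point has a unique outer unit normal. -/
def RegularBody (T : Set E2) : Prop :=
  ∀ x ∈ frontier T, ∃! v : E2, ‖v‖ = 1 ∧ SupportsAt T v x

theorem touching {T : Set E2} (hsc : StrictConvex ℝ T) {v a b : E2} (hv : v ≠ 0)
    (hs : SupportsAt T v a) (ha : a ∈ T) (hb : b ∈ T)
    (heq : (inner ℝ v a : ℝ) ≤ inner ℝ v b) : a = b := by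
  by_contra hne
  have hm : (1/2:ℝ)•a + (1/2:ℝ)•b ∈ interior T :=
    hsc ha hb hne (by norm_num) (by norm_num) (by norm_num)
  set m := (1/2:ℝ)•a + (1/2:ℝ)•b with hmdef
  obtain ⟨ε, hε, hball⟩ := Metric.isOpen_iff.1 isOpen_interior m hm
  have hvpos : (0:ℝ) < ‖v‖ := norm_pos_iff.2 hv
  have hw : m + (ε/(2*‖v‖)) • v ∈ T := by
    apply interior_subset; apply hball
    rw [Metric.mem_ball, dist_eq_norm]
    rw [show m + (ε/(2*‖v‖)) • v - m = (ε/(2*‖v‖)) • v by abel, norm_smul]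
    rw [Real.norm_eq_abs, abs_of_pos (by positivity)]
    have : ε/(2*‖v‖) * ‖v‖ = ε/2 := by field_simp
    rw [this]; linarith
  have h1 := hs _ hw
  have h2 : (inner ℝ v (m + (ε/(2*‖v‖)) • v) : ℝ) = inner ℝ v m + (ε/(2*‖v‖)) * ‖v‖^2 := by
    rw [inner_add_right, real_inner_smul_right, real_inner_self_eq_norm_sq]
  have h3 : (inner ℝ v m : ℝ) = (1/2) * inner ℝ v a + (1/2) * inner ℝ v b := by
    rw [hmdef, inner_add_right, real_inner_smul_right, real_inner_smul_right]
  have h5 : (0:ℝ) < ε/(2*‖v‖) * ‖v‖^2 := by positivity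
  linarith

theorem combo_sub (a b : ℝ) (x y w : E2) (h : a + b = 1) :
    a•x + b•y - w = a•(x-w) + b•(y-w) := by
  match_scalars <;> linarith

theorem seg_comp (x y : E2) (s c : ℝ) :
    (1 - c)•x + c•((1-s)•x + s•y) = (1 - c*s)•x + (c*s)•y := by
  match_scalars <;> ring

theorem seg_comp2 (x y : E2) (s c : ℝ) :
    c•((1-s)•x + s•y) + (1-c)•y = (c*(1-s))•x + (1 - c*(1-s))•y := by
  match_scalars <;> ring

theorem inner_combo (v x y : E2) (a b : ℝ) :
    (inner ℝ v (a•x+b•y) : ℝ) = a * inner ℝ v x + b * inner ℝ v y := by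
  rw [inner_add_right, real_inner_smul_right, real_inner_smul_right]

theorem perp_span (nl u : E2) (hnl : nl ≠ 0) (hu : u ≠ 0) (h : (inner ℝ nl u : ℝ) = 0)
    (z : E2) (hz : (inner ℝ nl z : ℝ) = 0) : ∃ t : ℝ, z = t • u := by
  have h2 : Module.finrank ℝ E2 = 2 := by simp
  have hK : (ℝ ∙ nl)ᗮ = ℝ ∙ u := by
    apply (Submodule.eq_of_le_of_finrank_eq ?_ ?_).symm
    · rw [Submodule.span_singleton_le_iff_mem, Submodule.mem_orthogonal_singleton_iff_inner_left]
      rwa [real_inner_comm] at h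
    · rw [finrank_span_singleton hu]
      have := Submodule.finrank_add_finrank_orthogonal (K := ℝ ∙ nl)
      rw [finrank_span_singleton hnl, h2] at this
      omega
  have : z ∈ (ℝ ∙ nl)ᗮ := by
    rw [Submodule.mem_orthogonal_singleton_iff_inner_left, real_inner_comm]; exact hz
  rw [hK, Submodule.mem_span_singleton] at this
  obtain ⟨t, ht⟩ := this
  exact ⟨t, ht.symm⟩

set_option maxHeartbeats 4000000 in
/-- gluing two regular strictly convex planar bodies along a chord through
two common boundary points with common tangent lines yields a regular strictly convex
body. -/
theorem glue_regular_strictly_convex (T₁ T₂ : Set E2)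
    (h₁ : IsBody2 T₁) (h₂ : IsBody2 T₂)
    (hsc₁ : StrictConvex ℝ T₁) (hsc₂ : StrictConvex ℝ T₂)
    (hreg₁ : RegularBody T₁) (hreg₂ : RegularBody T₂)
    (p q : E2) (hpq : p ≠ q)
    (hp : p ∈ frontier T₁ ∩ frontier T₂) (hq : q ∈ frontier T₁ ∩ frontier T₂)
    -- the tangent lines of `T₁` and `T₂` coincide at `p` and at `q`
    (htp : ∃ v : E2, ‖v‖ = 1 ∧ SupportsAt T₁ v p ∧ SupportsAt T₂ v p)
    (htq : ∃ v : E2, ‖v‖ = 1 ∧ SupportsAt T₁ v q ∧ SupportsAt T₂ v q)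
    (nl : E2) (hnl : nl ≠ 0) (hperp : (inner ℝ nl (q - p) : ℝ) = 0) :
    IsBody2 ((T₁ ∩ {x | 0 ≤ (inner ℝ nl (x - p) : ℝ)}) ∪
        (T₂ ∩ {x | (inner ℝ nl (x - p) : ℝ) ≤ 0})) ∧
    StrictConvex ℝ ((T₁ ∩ {x | 0 ≤ (inner ℝ nl (x - p) : ℝ)}) ∪
        (T₂ ∩ {x | (inner ℝ nl (x - p) : ℝ) ≤ 0})) ∧
    RegularBody ((T₁ ∩ {x | 0 ≤ (inner ℝ nl (x - p) : ℝ)}) ∪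
        (T₂ ∩ {x | (inner ℝ nl (x - p) : ℝ) ≤ 0})) := by
  obtain ⟨hp1, hp2⟩ := hp
  obtain ⟨hq1, hq2⟩ := hq
  obtain ⟨vp, hvp1, hvpS1, hvpS2⟩ := htp
  obtain ⟨vq, hvq1, hvqS1, hvqS2⟩ := htq
  have hvp0 : vp ≠ 0 := fun h => by simp [h] at hvp1
  have hvq0 : vq ≠ 0 := fun h => by simp [h] at hvq1
  have hT1c : IsClosed T₁ := h₁.1.isClosed
  have hT2c : IsClosed T₂ := h₂.1.isClosed
  have hpT1 : p ∈ T₁ := hT1c.frontier_subset hp1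
  have hpT2 : p ∈ T₂ := hT2c.frontier_subset hp2
  have hqT1 : q ∈ T₁ := hT1c.frontier_subset hq1
  have hqT2 : q ∈ T₂ := hT2c.frontier_subset hq2
  have hqp0 : q - p ≠ 0 := sub_ne_zero.2 hpq.symm
  set T : Set E2 := (T₁ ∩ {x | 0 ≤ (inner ℝ nl (x - p) : ℝ)}) ∪
      (T₂ ∩ {x | (inner ℝ nl (x - p) : ℝ) ≤ 0}) with hTdef
  -- strict support inequalities
  have hvpq : (inner ℝ vp q : ℝ) < inner ℝ vp p :=
    lt_of_le_of_ne (hvpS1 q hqT1) (fun h => hpq (touching hsc₁ hvp0 hvpS1 hpT1 hqT1 h.symm.le))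
  have hvqp : (inner ℝ vq p : ℝ) < inner ℝ vq q :=
    lt_of_le_of_ne (hvqS1 p hpT1) (fun h => hpq (touching hsc₁ hvq0 hvqS1 hqT1 hpT1 h.symm.le).symm)
  -- membership of points on the line
  have hline : ∀ z : E2, (inner ℝ nl (z-p) : ℝ) = 0 → (inner ℝ vp z : ℝ) ≤ inner ℝ vp p →
      (inner ℝ vq z : ℝ) ≤ inner ℝ vq q → ∃ t : ℝ, 0 ≤ t ∧ t ≤ 1 ∧ z = p + t•(q-p) := by
    intro z hz h1 h2
    obtain ⟨t, ht⟩ := perp_span nl (q-p) hnl hqp0 hperp (z-p) hz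
    have hzeq : z = p + t•(q-p) := by rw [← ht]; abel
    have e1 : (inner ℝ vp z : ℝ) = inner ℝ vp p + t * (inner ℝ vp q - inner ℝ vp p) := by
      rw [hzeq, inner_add_right, real_inner_smul_right, inner_sub_right]
    have e2 : (inner ℝ vq z : ℝ) = inner ℝ vq q + (t-1) * (inner ℝ vq q - inner ℝ vq p) := by
      rw [hzeq, inner_add_right, real_inner_smul_right, inner_sub_right]; ring
    refine ⟨t, ?_, ?_, hzeq⟩
    · by_contra hc
      push_neg at hc
      nlinarith [mul_pos (neg_pos.2 hc) (sub_pos.2 hvpq)]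
    · by_contra hc
      push_neg at hc
      nlinarith [mul_pos (sub_pos.2 hc) (sub_pos.2 hvqp)]
  -- points of the segment pq are in both bodies
  have hseg : ∀ t:ℝ, 0 ≤ t → t ≤ 1 → (p + t•(q-p) ∈ T₁ ∧ p + t•(q-p) ∈ T₂) := by
    intro t ht0 ht1
    have heq : p + t•(q-p) = (1-t)•p + t•q := by match_scalars <;> ring
    rw [heq]
    exact ⟨h₁.2.1 hpT1 hqT1 (by linarith) ht0 (by ring),
           h₂.2.1 hpT2 hqT2 (by linarith) ht0 (by ring)⟩
  have hvpU : ∀ w ∈ T₁ ∪ T₂, (inner ℝ vp w : ℝ) ≤ inner ℝ vp p := by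
    rintro w (hw | hw); exacts [hvpS1 w hw, hvpS2 w hw]
  have hvqU : ∀ w ∈ T₁ ∪ T₂, (inner ℝ vq w : ℝ) ≤ inner ℝ vq q := by
    rintro w (hw | hw); exacts [hvqS1 w hw, hvqS2 w hw]
  -- crossing lemma
  have hcross : ∀ x ∈ T₁ ∪ T₂, ∀ y ∈ T₁ ∪ T₂, ∀ a b : ℝ, 0 ≤ a → 0 ≤ b → a + b = 1 →
      (inner ℝ nl (a•x+b•y-p) : ℝ) = 0 → ∃ t : ℝ, 0 ≤ t ∧ t ≤ 1 ∧ a•x+b•y = p + t•(q-p) := by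
    intro x hx y hy a b ha hb hab hz
    apply hline _ hz
    · rw [inner_combo]
      have h1 := mul_le_mul_of_nonneg_left (hvpU x hx) ha
      have h2 := mul_le_mul_of_nonneg_left (hvpU y hy) hb
      have h3 : a*(inner ℝ vp p:ℝ) + b*inner ℝ vp p = inner ℝ vp p := by rw [← add_mul, hab, one_mul]
      linarith
    · rw [inner_combo]
      have h1 := mul_le_mul_of_nonneg_left (hvqU x hx) ha
      have h2 := mul_le_mul_of_nonneg_left (hvqU y hy) hb
      have h3 : a*(inner ℝ vq q:ℝ) + b*inner ℝ vq q = inner ℝ vq q := by rw [← add_mul, hab, one_mul]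
      linarith
  have hT12 : T₁ ∩ T₂ ⊆ T := by
    rintro w ⟨w1, w2⟩
    rcases le_or_gt 0 (inner ℝ nl (w-p) : ℝ) with h | h
    · exact Or.inl ⟨w1, h⟩
    · exact Or.inr ⟨w2, h.le⟩
  have hsegT : ∀ t:ℝ, 0 ≤ t → t ≤ 1 → p + t•(q-p) ∈ T := by
    intro t ht0 ht1
    exact hT12 ⟨(hseg t ht0 ht1).1, (hseg t ht0 ht1).2⟩
  have hfc : Continuous fun x : E2 => (inner ℝ nl (x - p) : ℝ) :=
    continuous_const.inner (continuous_id.sub continuous_const)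
  have hII : interior T₁ ∩ interior T₂ ⊆ interior T := by
    rw [← interior_inter]; exact interior_mono hT12
  have hopn : ∀ t:ℝ, 0 < t → t < 1 → p + t•(q-p) ∈ interior T := by
    intro t ht0 ht1
    have heq : p + t•(q-p) = (1-t)•p + t•q := by match_scalars <;> ring
    refine hII ⟨?_, ?_⟩ <;> rw [heq]
    · exact hsc₁ hpT1 hqT1 hpq (by linarith) ht0 (by ring)
    · exact hsc₂ hpT2 hqT2 hpq (by linarith) ht0 (by ring)
  have hI1 : interior T₁ ∩ {x | 0 < (inner ℝ nl (x-p) : ℝ)} ⊆ interior T := by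
    apply interior_maximal
    · rintro w ⟨hw1, hw2⟩
      have hw2' : (0:ℝ) < inner ℝ nl (w - p) := hw2
      exact Or.inl ⟨interior_subset hw1, show (0:ℝ) ≤ inner ℝ nl (w - p) from hw2'.le⟩
    · exact isOpen_interior.inter (isOpen_lt continuous_const hfc)
  have hI2 : interior T₂ ∩ {x | (inner ℝ nl (x-p) : ℝ) < 0} ⊆ interior T := by
    apply interior_maximal
    · rintro w ⟨hw1, hw2⟩
      have hw2' : (inner ℝ nl (w - p) : ℝ) < 0 := hw2
      exact Or.inr ⟨interior_subset hw1, show (inner ℝ nl (w - p) : ℝ) ≤ 0 from hw2'.le⟩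
    · exact isOpen_interior.inter (isOpen_lt hfc continuous_const)
  have hfcomb : ∀ (x y : E2) (a b : ℝ), a+b=1 →
      (inner ℝ nl (a•x+b•y-p) : ℝ) = a*inner ℝ nl (x-p) + b*inner ℝ nl (y-p) := by
    intro x y a b hab
    rw [combo_sub a b x y p hab, inner_combo]
  have honline : ∀ y, y ∈ T₁ ∪ T₂ → (inner ℝ nl (y-p) : ℝ) = 0 →
      ∃ t : ℝ, 0 ≤ t ∧ t ≤ 1 ∧ y = p + t•(q-p) := by
    intro y hy h
    exact hline y h (hvpU y hy) (hvqU y hy)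
  have honseg : ∀ y, y ∈ T₁ ∪ T₂ → (inner ℝ nl (y-p) : ℝ) = 0 → y ∈ T₁ ∧ y ∈ T₂ := by
    intro y hy h
    obtain ⟨t, ht0, ht1, hyeq⟩ := honline y hy h
    rw [hyeq]; exact hseg t ht0 ht1
  -- the mixed-case convexity lemma
  have mixed : ∀ x, x ∈ T₁ → 0 ≤ (inner ℝ nl (x-p):ℝ) → ∀ y, y ∈ T₂ → (inner ℝ nl (y-p):ℝ) ≤ 0 →
      ∀ a b : ℝ, 0 ≤ a → 0 ≤ b → a + b = 1 → a•x + b•y ∈ T := by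
    intro x hx hfx y hy hfy a b ha hb hab
    rcases eq_or_lt_of_le hfy with hfy0 | hfy0
    · -- y is on the line, hence in T₁ as well
      have hyT1 : y ∈ T₁ := (honseg y (Or.inr hy) hfy0).1
      refine Or.inl ⟨h₁.2.1 hx hyT1 ha hb hab, ?_⟩
      show (0:ℝ) ≤ inner ℝ nl (a•x+b•y-p)
      rw [hfcomb x y a b hab, hfy0, mul_zero, add_zero]
      exact mul_nonneg ha hfx
    · rcases eq_or_lt_of_le hfx with hfx0 | hfx0
      · have hxT2 : x ∈ T₂ := (honseg x (Or.inl hx) hfx0.symm).2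
        refine Or.inr ⟨h₂.2.1 hxT2 hy ha hb hab, ?_⟩
        show (inner ℝ nl (a•x+b•y-p):ℝ) ≤ 0
        rw [hfcomb x y a b hab, ← hfx0, mul_zero, zero_add]
        have := mul_le_mul_of_nonneg_left hfy0.le hb
        simpa using this
      · -- genuine crossing case
        set fx : ℝ := inner ℝ nl (x-p) with hfxd
        set fy : ℝ := inner ℝ nl (y-p) with hfyd
        set s₀ : ℝ := fx/(fx-fy) with hs0d
        have hd : (0:ℝ) < fx - fy := by linarith
        have hs0pos : 0 < s₀ := div_pos hfx0 hd
        have hs0lt : s₀ < 1 := by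
          rw [hs0d, div_lt_one hd]; linarith
        have hkey : s₀ * (fx - fy) = fx := by
          rw [hs0d]; field_simp
        have hfz : (inner ℝ nl ((1-s₀)•x+s₀•y-p) : ℝ) = 0 := by
          rw [hfcomb x y (1-s₀) s₀ (by ring)]
          rw [← hfxd, ← hfyd]; nlinarith [hkey]
        obtain ⟨t, ht0, ht1, hzeq⟩ := hcross x (Or.inl hx) y (Or.inr hy) (1-s₀) s₀
          (by linarith) (by linarith) (by ring) hfz
        have hzT : (1-s₀)•x+s₀•y ∈ T₁ ∧ (1-s₀)•x+s₀•y ∈ T₂ := by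
          rw [hzeq]; exact hseg t ht0 ht1
        set z : E2 := (1-s₀)•x+s₀•y with hzd
        have hs0ne : s₀ ≠ 0 := ne_of_gt hs0pos
        rcases le_or_gt b s₀ with hbs | hbs
        · -- point lies in T₁ ∩ ℓ⁺
          have hcs : (b/s₀) * s₀ = b := div_mul_cancel₀ b hs0ne
          have hw : a•x + b•y = (1 - b/s₀)•x + (b/s₀)•z := by
            rw [hzd, seg_comp, hcs, show a = 1 - b by linarith]
          have hb1 : b/s₀ ≤ 1 := by
            rw [div_le_one hs0pos]; exact hbs
          have hb0 : 0 ≤ b/s₀ := by positivity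
          refine Or.inl ⟨?_, ?_⟩
          · rw [hw]; exact h₁.2.1 hx hzT.1 (by linarith) hb0 (by ring)
          · show (0:ℝ) ≤ inner ℝ nl (a•x+b•y-p)
            rw [hfcomb x y a b hab, ← hfxd, ← hfyd]
            have e : a*fx + b*fy = fx - b*(fx-fy) := by
              rw [show a = 1-b by linarith]; ring
            have : b*(fx-fy) ≤ s₀*(fx-fy) := mul_le_mul_of_nonneg_right hbs hd.le
            linarith [hkey]
        · -- point lies in T₂ ∩ ℓ⁻
          have h1s : (0:ℝ) < 1 - s₀ := by linarith
          have hcs : (a/(1-s₀)) * (1-s₀) = a := div_mul_cancel₀ a (ne_of_gt h1s)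
          have hw : a•x + b•y = (a/(1-s₀))•z + (1 - a/(1-s₀))•y := by
            rw [hzd, seg_comp2, hcs, show b = 1 - a by linarith]
          have hc1 : a/(1-s₀) ≤ 1 := by
            rw [div_le_one h1s]; linarith
          have hc0 : 0 ≤ a/(1-s₀) := by positivity
          refine Or.inr ⟨?_, ?_⟩
          · rw [hw]; exact h₂.2.1 hzT.2 hy hc0 (by linarith) (by ring)
          · show (inner ℝ nl (a•x+b•y-p):ℝ) ≤ 0
            rw [hfcomb x y a b hab, ← hfxd, ← hfyd]
            have e : a*fx + b*fy = fx - b*(fx-fy) := by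
              rw [show a = 1-b by linarith]; ring
            have : s₀*(fx-fy) ≤ b*(fx-fy) := mul_le_mul_of_nonneg_right hbs.le hd.le
            linarith [hkey]
  have hconv : Convex ℝ T := by
    rintro x (⟨hx, hfx⟩|⟨hx, hfx⟩) y (⟨hy, hfy⟩|⟨hy, hfy⟩) a b ha hb hab
    · refine Or.inl ⟨h₁.2.1 hx hy ha hb hab, ?_⟩
      show (0:ℝ) ≤ inner ℝ nl (a•x+b•y-p)
      rw [hfcomb x y a b hab]
      have hfx' : (0:ℝ) ≤ inner ℝ nl (x-p) := hfx
      have hfy' : (0:ℝ) ≤ inner ℝ nl (y-p) := hfy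
      positivity
    · exact mixed x hx hfx y hy hfy a b ha hb hab
    · rw [show a•x+b•y = b•y+a•x from add_comm _ _]
      exact mixed y hy hfy x hx hfx b a hb ha (by linarith)
    · refine Or.inr ⟨h₂.2.1 hx hy ha hb hab, ?_⟩
      show (inner ℝ nl (a•x+b•y-p):ℝ) ≤ 0
      rw [hfcomb x y a b hab]
      have hfx' : (inner ℝ nl (x-p):ℝ) ≤ 0 := hfx
      have hfy' : (inner ℝ nl (y-p):ℝ) ≤ 0 := hfy
      have h1 := mul_le_mul_of_nonneg_left hfx' ha
      have h2 := mul_le_mul_of_nonneg_left hfy' hb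
      linarith
  have hLc : IsClosed {x : E2 | 0 ≤ (inner ℝ nl (x-p):ℝ)} := isClosed_le continuous_const hfc
  have hLc' : IsClosed {x : E2 | (inner ℝ nl (x-p):ℝ) ≤ 0} := isClosed_le hfc continuous_const
  have hcpt : IsCompact T := (h₁.1.inter_right hLc).union (h₂.1.inter_right hLc')
  -- strict convexity: mixed case helper
  have smix : ∀ x, x ∈ T₁ → 0 ≤ (inner ℝ nl (x-p):ℝ) → ∀ y, y ∈ T₂ → (inner ℝ nl (y-p):ℝ) ≤ 0 →
      x ≠ y → ∀ a b : ℝ, 0 < a → 0 < b → a + b = 1 → a•x + b•y ∈ interior T := by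
    intro x hx hfx y hy hfy hxy a b ha hb hab
    set fx : ℝ := inner ℝ nl (x-p) with hfxd
    set fy : ℝ := inner ℝ nl (y-p) with hfyd
    rcases lt_trichotomy (a*fx + b*fy) 0 with hneg | hzero | hpos
    · -- w strictly below the line: lands in interior T₂
      rcases eq_or_lt_of_le hfx with hfx0 | hfx0
      · have hxT2 : x ∈ T₂ := (honseg x (Or.inl hx) hfx0.symm).2
        refine hI2 ⟨hsc₂ hxT2 hy hxy ha hb hab, ?_⟩
        show (inner ℝ nl (a•x+b•y-p):ℝ) < 0
        rw [hfcomb x y a b hab]; exact hneg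
      · have hfy0 : fy < 0 := by nlinarith
        set s₀ : ℝ := fx/(fx-fy) with hs0d
        have hd : (0:ℝ) < fx - fy := by linarith
        have hs0pos : 0 < s₀ := div_pos hfx0 hd
        have hs0lt : s₀ < 1 := by rw [hs0d, div_lt_one hd]; linarith
        have hkey : s₀ * (fx - fy) = fx := by rw [hs0d]; field_simp
        have hfz : (inner ℝ nl ((1-s₀)•x+s₀•y-p) : ℝ) = 0 := by
          rw [hfcomb x y (1-s₀) s₀ (by ring), ← hfxd, ← hfyd]; nlinarith [hkey]
        obtain ⟨t, ht0, ht1, hzeq⟩ := hcross x (Or.inl hx) y (Or.inr hy) (1-s₀) s₀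
          (by linarith) (by linarith) (by ring) hfz
        have hzT : (1-s₀)•x+s₀•y ∈ T₁ ∧ (1-s₀)•x+s₀•y ∈ T₂ := by
          rw [hzeq]; exact hseg t ht0 ht1
        set z : E2 := (1-s₀)•x+s₀•y with hzd
        have h1s : (0:ℝ) < 1 - s₀ := by linarith
        have hsb : s₀ < b := by
          have h5 : b*(fx-fy) > fx := by nlinarith
          nlinarith [hkey]
        have hcs : (a/(1-s₀)) * (1-s₀) = a := div_mul_cancel₀ a (ne_of_gt h1s)
        have hw : a•x + b•y = (a/(1-s₀))•z + (1 - a/(1-s₀))•y := by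
          rw [hzd, seg_comp2, hcs, show b = 1 - a by linarith]
        have hzy : z ≠ y := by
          intro h
          rw [h] at hfz
          have : fy = 0 := by rw [hfyd]; exact hfz
          linarith
        have hc0 : 0 < a/(1-s₀) := div_pos ha h1s
        have hc1 : a/(1-s₀) < 1 := by rw [div_lt_one h1s]; linarith
        refine hI2 ⟨?_, ?_⟩
        · rw [hw]; exact hsc₂ hzT.2 hy hzy hc0 (by linarith) (by ring)
        · show (inner ℝ nl (a•x+b•y-p):ℝ) < 0
          rw [hfcomb x y a b hab]; exact hneg
    · -- w on the line: it is strictly between p and q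
      have hfw : (inner ℝ nl (a•x+b•y-p):ℝ) = 0 := by
        rw [hfcomb x y a b hab]; exact hzero
      obtain ⟨t, ht0, ht1, hweq⟩ := hcross x (Or.inl hx) y (Or.inr hy) a b ha.le hb.le hab hfw
      have hnep : a•x+b•y ≠ p := by
        intro h
        have h1 : (inner ℝ vp (a•x+b•y) : ℝ) = inner ℝ vp p := by rw [h]
        rw [inner_combo] at h1
        have h2 := hvpS1 x hx
        have h3 := hvpS2 y hy
        have hsum : a*(inner ℝ vp p:ℝ) + b*inner ℝ vp p = inner ℝ vp p := by
          rw [← add_mul, hab, one_mul]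
        have h4 : (inner ℝ vp x : ℝ) = inner ℝ vp p := by
          by_contra hne
          have hlt := lt_of_le_of_ne h2 hne
          have c1 := mul_lt_mul_of_pos_left hlt ha
          have c2 := mul_le_mul_of_nonneg_left h3 hb.le
          linarith
        have h5 : (inner ℝ vp y : ℝ) = inner ℝ vp p := by
          have hy5 : b * (inner ℝ vp y:ℝ) = b * inner ℝ vp p := by nlinarith [h4]
          exact mul_left_cancel₀ (ne_of_gt hb) hy5
        have e1 : p = x := touching hsc₁ hvp0 hvpS1 hpT1 hx h4.symm.le
        have e2 : p = y := touching hsc₂ hvp0 hvpS2 hpT2 hy h5.symm.le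
        exact hxy (e1 ▸ e2 ▸ rfl)
      have hneq : a•x+b•y ≠ q := by
        intro h
        have h1 : (inner ℝ vq (a•x+b•y) : ℝ) = inner ℝ vq q := by rw [h]
        rw [inner_combo] at h1
        have h2 := hvqS1 x hx
        have h3 := hvqS2 y hy
        have hsum : a*(inner ℝ vq q:ℝ) + b*inner ℝ vq q = inner ℝ vq q := by
          rw [← add_mul, hab, one_mul]
        have h4 : (inner ℝ vq x : ℝ) = inner ℝ vq q := by
          by_contra hne
          have hlt := lt_of_le_of_ne h2 hne
          have c1 := mul_lt_mul_of_pos_left hlt ha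
          have c2 := mul_le_mul_of_nonneg_left h3 hb.le
          linarith
        have h5 : (inner ℝ vq y : ℝ) = inner ℝ vq q := by
          have hy5 : b * (inner ℝ vq y:ℝ) = b * inner ℝ vq q := by nlinarith [h4]
          exact mul_left_cancel₀ (ne_of_gt hb) hy5
        have e1 : q = x := touching hsc₁ hvq0 hvqS1 hqT1 hx h4.symm.le
        have e2 : q = y := touching hsc₂ hvq0 hvqS2 hqT2 hy h5.symm.le
        exact hxy (e1 ▸ e2 ▸ rfl)
      have ht0' : 0 < t := by
        rcases eq_or_lt_of_le ht0 with h | h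
        · exfalso; apply hnep; rw [hweq, ← h]; simp
        · exact h
      have ht1' : t < 1 := by
        rcases eq_or_lt_of_le ht1 with h | h
        · exfalso; apply hneq; rw [hweq, h]; simp
        · exact h
      rw [hweq]; exact hopn t ht0' ht1'
    · -- w strictly above the line: lands in interior T₁
      have hfx0 : 0 < fx := by nlinarith
      rcases eq_or_lt_of_le hfy with hfy0 | hfy0
      · have hyT1 : y ∈ T₁ := (honseg y (Or.inr hy) hfy0).1
        refine hI1 ⟨hsc₁ hx hyT1 hxy ha hb hab, ?_⟩
        show (0:ℝ) < inner ℝ nl (a•x+b•y-p)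
        rw [hfcomb x y a b hab]; exact hpos
      · set s₀ : ℝ := fx/(fx-fy) with hs0d
        have hd : (0:ℝ) < fx - fy := by linarith
        have hs0pos : 0 < s₀ := div_pos hfx0 hd
        have hs0lt : s₀ < 1 := by rw [hs0d, div_lt_one hd]; linarith
        have hkey : s₀ * (fx - fy) = fx := by rw [hs0d]; field_simp
        have hfz : (inner ℝ nl ((1-s₀)•x+s₀•y-p) : ℝ) = 0 := by
          rw [hfcomb x y (1-s₀) s₀ (by ring), ← hfxd, ← hfyd]; nlinarith [hkey]
        obtain ⟨t, ht0, ht1, hzeq⟩ := hcross x (Or.inl hx) y (Or.inr hy) (1-s₀) s₀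
          (by linarith) (by linarith) (by ring) hfz
        have hzT : (1-s₀)•x+s₀•y ∈ T₁ ∧ (1-s₀)•x+s₀•y ∈ T₂ := by
          rw [hzeq]; exact hseg t ht0 ht1
        set z : E2 := (1-s₀)•x+s₀•y with hzd
        have hs0ne : s₀ ≠ 0 := ne_of_gt hs0pos
        have hbs : b < s₀ := by
          have h5 : b*(fx-fy) < fx := by nlinarith
          nlinarith [hkey]
        have hcs : (b/s₀) * s₀ = b := div_mul_cancel₀ b hs0ne
        have hw : a•x + b•y = (1 - b/s₀)•x + (b/s₀)•z := by
          rw [hzd, seg_comp, hcs, show a = 1 - b by linarith]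
        have hxz : x ≠ z := by
          intro h
          rw [← h] at hfz
          have : fx = 0 := by rw [hfxd]; exact hfz
          linarith
        have hc0 : 0 < b/s₀ := div_pos hb hs0pos
        have hc1 : b/s₀ < 1 := by rw [div_lt_one hs0pos]; exact hbs
        refine hI1 ⟨?_, ?_⟩
        · rw [hw]; exact hsc₁ hx hzT.1 hxz (by linarith) hc0 (by ring)
        · show (0:ℝ) < inner ℝ nl (a•x+b•y-p)
          rw [hfcomb x y a b hab]; exact hpos
  have hstrict : StrictConvex ℝ T := by
    rintro x (⟨hx1, hfx⟩|⟨hx1, hfx⟩) y (⟨hy1, hfy⟩|⟨hy1, hfy⟩) hxy a b ha hb hab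
    · have hfx' : (0:ℝ) ≤ inner ℝ nl (x-p) := hfx
      have hfy' : (0:ℝ) ≤ inner ℝ nl (y-p) := hfy
      have hw1 : a•x+b•y ∈ interior T₁ := hsc₁ hx1 hy1 hxy ha hb hab
      rcases eq_or_lt_of_le (by positivity : (0:ℝ) ≤ a*inner ℝ nl (x-p) + b*inner ℝ nl (y-p)) with h0 | h0
      · have hx0 : (inner ℝ nl (x-p):ℝ) = 0 := by nlinarith
        have hy0 : (inner ℝ nl (y-p):ℝ) = 0 := by nlinarith
        have hxT2 : x ∈ T₂ := (honseg x (Or.inl hx1) hx0).2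
        have hyT2 : y ∈ T₂ := (honseg y (Or.inl hy1) hy0).2
        exact hII ⟨hw1, hsc₂ hxT2 hyT2 hxy ha hb hab⟩
      · refine hI1 ⟨hw1, ?_⟩
        show (0:ℝ) < inner ℝ nl (a•x+b•y-p)
        rw [hfcomb x y a b hab]; exact h0
    · exact smix x hx1 hfx y hy1 hfy hxy a b ha hb hab
    · rw [show a•x+b•y = b•y+a•x from add_comm _ _]
      exact smix y hy1 hfy x hx1 hfx hxy.symm b a hb ha (by linarith)
    · have hfx' : (inner ℝ nl (x-p):ℝ) ≤ 0 := hfx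
      have hfy' : (inner ℝ nl (y-p):ℝ) ≤ 0 := hfy
      have hw2 : a•x+b•y ∈ interior T₂ := hsc₂ hx1 hy1 hxy ha hb hab
      have hle : a*(inner ℝ nl (x-p):ℝ) + b*inner ℝ nl (y-p) ≤ 0 := by
        have h1 := mul_le_mul_of_nonneg_left hfx' ha.le
        have h2 := mul_le_mul_of_nonneg_left hfy' hb.le
        linarith
      rcases eq_or_lt_of_le hle with h0 | h0
      · have hx0 : (inner ℝ nl (x-p):ℝ) = 0 := by nlinarith
        have hy0 : (inner ℝ nl (y-p):ℝ) = 0 := by nlinarith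
        have hxT1 : x ∈ T₁ := (honseg x (Or.inr hx1) hx0).1
        have hyT1 : y ∈ T₁ := (honseg y (Or.inr hy1) hy0).1
        exact hII ⟨hsc₁ hxT1 hyT1 hxy ha hb hab, hw2⟩
      · refine hI2 ⟨hw2, ?_⟩
        show (inner ℝ nl (a•x+b•y-p):ℝ) < 0
        rw [hfcomb x y a b hab]; exact h0
  have hTU : T ⊆ T₁ ∪ T₂ := by
    rintro w (⟨h, _⟩|⟨h, _⟩)
    exacts [Or.inl h, Or.inr h]
  -- extension lemmas for supporting normals across the chord
  have ext1 : ∀ (v' x y : E2), x ∈ T₁ ∪ T₂ → y ∈ T₁ ∪ T₂ →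
      0 < (inner ℝ nl (x-p):ℝ) → (inner ℝ nl (y-p):ℝ) < 0 →
      (∀ t:ℝ, 0 ≤ t → t ≤ 1 → (inner ℝ v' (p + t•(q-p)) : ℝ) ≤ inner ℝ v' x) →
      (inner ℝ v' y : ℝ) ≤ inner ℝ v' x := by
    intro v' x y hxU hyU hfx hfy hsegb
    set fx : ℝ := inner ℝ nl (x-p) with hfxd
    set fy : ℝ := inner ℝ nl (y-p) with hfyd
    set σ : ℝ := -fy/(fx-fy) with hσd
    have hd : (0:ℝ) < fx - fy := by linarith
    have hσ0 : 0 < σ := div_pos (by linarith) hd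
    have hσ1 : σ < 1 := by rw [hσd, div_lt_one hd]; linarith
    have hkey : σ * (fx - fy) = -fy := by rw [hσd]; field_simp
    have hfz : (inner ℝ nl ((1-σ)•y+σ•x-p) : ℝ) = 0 := by
      rw [hfcomb y x (1-σ) σ (by ring), ← hfxd, ← hfyd]; nlinarith [hkey]
    obtain ⟨t, ht0, ht1, hzeq⟩ := hcross y hyU x hxU (1-σ) σ
      (by linarith) (by linarith) (by ring) hfz
    have hzb : (inner ℝ v' ((1-σ)•y+σ•x) : ℝ) ≤ inner ℝ v' x := by
      rw [hzeq]; exact hsegb t ht0 ht1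
    rw [inner_combo] at hzb
    have h1σ : 0 < 1 - σ := by linarith
    by_contra hc
    push_neg at hc
    nlinarith [mul_lt_mul_of_pos_left hc h1σ]
  have ext2 : ∀ (v' x y : E2), x ∈ T₁ ∪ T₂ → y ∈ T₁ ∪ T₂ →
      (inner ℝ nl (x-p):ℝ) < 0 → 0 < (inner ℝ nl (y-p):ℝ) →
      (∀ t:ℝ, 0 ≤ t → t ≤ 1 → (inner ℝ v' (p + t•(q-p)) : ℝ) ≤ inner ℝ v' x) →
      (inner ℝ v' y : ℝ) ≤ inner ℝ v' x := by
    intro v' x y hxU hyU hfx hfy hsegb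
    set fx : ℝ := inner ℝ nl (x-p) with hfxd
    set fy : ℝ := inner ℝ nl (y-p) with hfyd
    set σ : ℝ := fy/(fy-fx) with hσd
    have hd : (0:ℝ) < fy - fx := by linarith
    have hσ0 : 0 < σ := div_pos (by linarith) hd
    have hσ1 : σ < 1 := by rw [hσd, div_lt_one hd]; linarith
    have hkey : σ * (fy - fx) = fy := by rw [hσd]; field_simp
    have hfz : (inner ℝ nl ((1-σ)•y+σ•x-p) : ℝ) = 0 := by
      rw [hfcomb y x (1-σ) σ (by ring), ← hfxd, ← hfyd]; nlinarith [hkey]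
    obtain ⟨t, ht0, ht1, hzeq⟩ := hcross y hyU x hxU (1-σ) σ
      (by linarith) (by linarith) (by ring) hfz
    have hzb : (inner ℝ v' ((1-σ)•y+σ•x) : ℝ) ≤ inner ℝ v' x := by
      rw [hzeq]; exact hsegb t ht0 ht1
    rw [inner_combo] at hzb
    have h1σ : 0 < 1 - σ := by linarith
    by_contra hc
    push_neg at hc
    nlinarith [mul_lt_mul_of_pos_left hc h1σ]
  -- uniqueness of the unit normal at the two junction points
  have uniqat : ∀ r : E2, r ∈ frontier T₁ → r ∈ frontier T₂ → ∀ vr : E2, ‖vr‖ = 1 →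
      SupportsAt T₁ vr r → SupportsAt T₂ vr r → ∃! v : E2, ‖v‖ = 1 ∧ SupportsAt T v r := by
    intro r hr1 hr2 vr hvr1 hvrS1 hvrS2
    refine ⟨vr, ⟨hvr1, ?_⟩, ?_⟩
    · intro y hy
      rcases hTU hy with h | h
      exacts [hvrS1 y h, hvrS2 y h]
    · rintro v' ⟨hv'1, hv'S⟩
      have halt : SupportsAt T₁ v' r ∨ SupportsAt T₂ v' r := by
        by_contra hcon
        push_neg at hcon
        obtain ⟨h1, h2⟩ := hcon
        unfold SupportsAt at h1 h2
        push_neg at h1 h2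
        obtain ⟨y₁, hy₁, hlt₁⟩ := h1
        obtain ⟨y₂, hy₂, hlt₂⟩ := h2
        have hf1 : (inner ℝ nl (y₁-p):ℝ) < 0 := by
          by_contra hcc; push_neg at hcc
          exact absurd (hv'S y₁ (Or.inl ⟨hy₁, hcc⟩)) (not_le.2 hlt₁)
        have hf2 : (0:ℝ) < inner ℝ nl (y₂-p) := by
          by_contra hcc; push_neg at hcc
          exact absurd (hv'S y₂ (Or.inr ⟨hy₂, hcc⟩)) (not_le.2 hlt₂)
        set f1 : ℝ := inner ℝ nl (y₁-p) with hf1d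
        set f2 : ℝ := inner ℝ nl (y₂-p) with hf2d
        set σ : ℝ := -f1/(f2-f1) with hσd
        have hd : (0:ℝ) < f2 - f1 := by linarith
        have hσ0 : 0 < σ := div_pos (by linarith) hd
        have hσ1 : σ < 1 := by rw [hσd, div_lt_one hd]; linarith
        have hkey : σ * (f2 - f1) = -f1 := by rw [hσd]; field_simp
        have hfz : (inner ℝ nl ((1-σ)•y₁+σ•y₂-p) : ℝ) = 0 := by
          rw [hfcomb y₁ y₂ (1-σ) σ (by ring), ← hf1d, ← hf2d]; nlinarith [hkey]
        obtain ⟨t, ht0, ht1, hzeq⟩ := hcross y₁ (Or.inl hy₁) y₂ (Or.inr hy₂) (1-σ) σ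
          (by linarith) (by linarith) (by ring) hfz
        have hzT : (1-σ)•y₁+σ•y₂ ∈ T := by rw [hzeq]; exact hsegT t ht0 ht1
        have hzb := hv'S _ hzT
        rw [inner_combo] at hzb
        have h1σ : 0 < 1 - σ := by linarith
        nlinarith [mul_lt_mul_of_pos_left hlt₁ h1σ, mul_lt_mul_of_pos_left hlt₂ hσ0]
      rcases halt with hS | hS
      · obtain ⟨w, hw, hwu⟩ := hreg₁ r hr1
        exact (hwu v' ⟨hv'1, hS⟩).trans (hwu vr ⟨hvr1, hvrS1⟩).symm
      · obtain ⟨w, hw, hwu⟩ := hreg₂ r hr2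
        exact (hwu v' ⟨hv'1, hS⟩).trans (hwu vr ⟨hvr1, hvrS2⟩).symm
  refine ⟨⟨hcpt, hconv, ⟨_, hopn (1/2) one_half_pos (by norm_num)⟩⟩, hstrict, ?_⟩
  -- regularity
  intro x hxf
  rw [hcpt.isClosed.frontier_eq] at hxf
  obtain ⟨hxT, hxnI⟩ := hxf
  rcases hxT with ⟨hx1, hfx⟩ | ⟨hx1, hfx⟩
  · have hfx' : (0:ℝ) ≤ inner ℝ nl (x-p) := hfx
    rcases eq_or_lt_of_le hfx' with h0 | h0
    · -- on the chord: x = p or x = q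
      obtain ⟨t, ht0, ht1, hxeq⟩ := honline x (Or.inl hx1) h0.symm
      rcases eq_or_lt_of_le ht0 with h | h
      · have hxp : x = p := by rw [hxeq, ← h]; simp
        rw [hxp]; exact uniqat p hp1 hp2 vp hvp1 hvpS1 hvpS2
      · rcases eq_or_lt_of_le ht1 with h' | h'
        · have hxq : x = q := by rw [hxeq, h']; simp
          rw [hxq]; exact uniqat q hq1 hq2 vq hvq1 hvqS1 hvqS2
        · exact absurd (hxeq ▸ hopn t h h') hxnI
    · have hxfr1 : x ∈ frontier T₁ := by
        rw [hT1c.frontier_eq]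
        refine ⟨hx1, fun hI => hxnI (hI1 ⟨hI, ?_⟩)⟩
        show (0:ℝ) < inner ℝ nl (x - p)
        exact h0
      obtain ⟨v, ⟨hv1, hvS⟩, hvu⟩ := hreg₁ x hxfr1
      refine ⟨v, ⟨hv1, ?_⟩, ?_⟩
      · rintro y (⟨hy, hfy⟩ | ⟨hy, hfy⟩)
        · exact hvS y hy
        · have hfy' : (inner ℝ nl (y-p):ℝ) ≤ 0 := hfy
          rcases eq_or_lt_of_le hfy' with h00 | h00
          · exact hvS y (honseg y (Or.inr hy) h00).1
          · refine ext1 v x y (Or.inl hx1) (Or.inr hy) h0 h00 ?_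
            intro t ht0 ht1
            exact hvS _ (hseg t ht0 ht1).1
      · rintro v' ⟨hv'1, hv'S⟩
        refine hvu v' ⟨hv'1, ?_⟩
        intro y hy
        rcases le_or_gt 0 (inner ℝ nl (y-p) : ℝ) with h00 | h00
        · exact hv'S y (Or.inl ⟨hy, h00⟩)
        · refine ext1 v' x y (Or.inl hx1) (Or.inl hy) h0 h00 ?_
          intro t ht0 ht1
          exact hv'S _ (hsegT t ht0 ht1)
  · have hfx' : (inner ℝ nl (x-p):ℝ) ≤ 0 := hfx
    rcases eq_or_lt_of_le hfx' with h0 | h0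
    · obtain ⟨t, ht0, ht1, hxeq⟩ := honline x (Or.inr hx1) h0
      rcases eq_or_lt_of_le ht0 with h | h
      · have hxp : x = p := by rw [hxeq, ← h]; simp
        rw [hxp]; exact uniqat p hp1 hp2 vp hvp1 hvpS1 hvpS2
      · rcases eq_or_lt_of_le ht1 with h' | h'
        · have hxq : x = q := by rw [hxeq, h']; simp
          rw [hxq]; exact uniqat q hq1 hq2 vq hvq1 hvqS1 hvqS2
        · exact absurd (hxeq ▸ hopn t h h') hxnI
    · have hxfr2 : x ∈ frontier T₂ := by
        rw [hT2c.frontier_eq]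
        refine ⟨hx1, fun hI => hxnI (hI2 ⟨hI, ?_⟩)⟩
        show (inner ℝ nl (x - p):ℝ) < 0
        exact h0
      obtain ⟨v, ⟨hv1, hvS⟩, hvu⟩ := hreg₂ x hxfr2
      refine ⟨v, ⟨hv1, ?_⟩, ?_⟩
      · rintro y (⟨hy, hfy⟩ | ⟨hy, hfy⟩)
        · have hfy' : (0:ℝ) ≤ inner ℝ nl (y-p) := hfy
          rcases eq_or_lt_of_le hfy' with h00 | h00
          · exact hvS y (honseg y (Or.inl hy) h00.symm).2
          · refine ext2 v x y (Or.inr hx1) (Or.inl hy) h0 h00 ?_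
            intro t ht0 ht1
            exact hvS _ (hseg t ht0 ht1).2
        · exact hvS y hy
      · rintro v' ⟨hv'1, hv'S⟩
        refine hvu v' ⟨hv'1, ?_⟩
        intro y hy
        rcases le_or_gt (inner ℝ nl (y-p) : ℝ) 0 with h00 | h00
        · exact hv'S y (Or.inr ⟨hy, h00⟩)
        · refine ext2 v' x y (Or.inr hx1) (Or.inr hy) h0 h00 ?_
          intro t ht0 ht1
          exact hv'S _ (hsegT t ht0 ht1)
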